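/- Let ε₀ > 0 and let γ : [0, ε₀] → ℝⁿ be a real-analytic curve that is skew, i.e. there is no nonzero vector λ ∈ ℝⁿ and constant c ∈ ℝ with ⟨λ, γ(ε)⟩ + c = 0 for all ε ∈ [0, ε₀]. Then the set of ε ∈ [0, ε₀] for which the n+1 real numbers γ₁(ε), …, γₙ(ε), 1 are linearly independent over ℚ is dense in [0, ε₀]. -/

import Mathlib

/-- If `γ : [0, ε₀] → ℝⁿ` is a real-analytic skew curve, then the set of
`ε ∈ [0, ε₀]` such that `γ₁(ε), …, γₙ(ε), 1` are `ℚ`-linearly independent is dense in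
`[0, ε₀]`. -/
theorem lissajous_stmt0 (n : ℕ) (ε₀ : ℝ) (hε₀ : 0 < ε₀) (γ : ℝ → Fin n → ℝ)
    (hanal : ∀ i : Fin n, AnalyticOnNhd ℝ (fun ε => γ ε i) (Set.Icc 0 ε₀))
    (hskew : ¬ ∃ (lam : Fin n → ℝ) (c : ℝ), lam ≠ 0 ∧
      ∀ ε ∈ Set.Icc (0:ℝ) ε₀, (∑ i, lam i * γ ε i) + c = 0) :
    Set.Icc (0:ℝ) ε₀ ⊆ closure {ε | ε ∈ Set.Icc (0:ℝ) ε₀ ∧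
      ∀ (q : Fin n → ℚ) (q0 : ℚ), (∑ i, (q i : ℝ) * γ ε i) + (q0 : ℝ) = 0 →
        (∀ i, q i = 0) ∧ q0 = 0} := by
  set I : Set ℝ := Set.Icc (0:ℝ) ε₀ with hI
  -- the linear combination function for a rational tuple
  set f : ((Fin n → ℚ) × ℚ) → ℝ → ℝ :=
    fun p ε => (∑ i, (p.1 i : ℝ) * γ ε i) + (p.2 : ℝ) with hf
  have hfanal : ∀ p, AnalyticOnNhd ℝ (f p) I := by
    intro p
    apply AnalyticOnNhd.add
    · exact Finset.analyticOnNhd_fun_sum _ (fun i _ =>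
        (analyticOnNhd_const).mul (hanal i))
    · exact analyticOnNhd_const
  have hfcont : ∀ p, ContinuousOn (f p) I := fun p => (hfanal p).continuousOn
  -- the "bad" closed sets
  set Z : ((Fin n → ℚ) × ℚ) → Set ℝ := fun p => I ∩ (f p) ⁻¹' {0} with hZ
  have hZclosed : ∀ p, IsClosed (Z p) :=
    fun p => (hfcont p).preimage_isClosed_of_isClosed isClosed_Icc isClosed_singleton
  -- if f p vanishes on all of I then conclusion holds
  have hkey : ∀ p : (Fin n → ℚ) × ℚ, Set.EqOn (f p) 0 I →
      (∀ i, p.1 i = 0) ∧ p.2 = 0 := by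
    intro p heq
    by_cases hq : ∀ i, p.1 i = 0
    · refine ⟨hq, ?_⟩
      have h0 : f p 0 = 0 := heq (Set.left_mem_Icc.2 hε₀.le)
      simp only [hf, hq] at h0
      simpa using h0
    · exfalso
      apply hskew
      push_neg at hq
      obtain ⟨i, hi⟩ := hq
      refine ⟨fun i => (p.1 i : ℝ), (p.2 : ℝ), ?_, ?_⟩
      · intro h
        have h2 : (p.1 i : ℝ) = 0 := congrFun h i
        exact hi (by exact_mod_cast h2)
      · intro ε hε
        exact heq hε
  -- each Z p has empty interior... its complement (as a good set) is dense
  set W : ((Fin n → ℚ) × ℚ) → Set ℝ :=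
    fun p => {x | ¬ (x ∈ I ∧ f p x = 0)} ∪
      {x | (∀ i, p.1 i = 0) ∧ p.2 = 0} with hW
  have hWopen : ∀ p, IsOpen (W p) := by
    intro p
    by_cases hc : (∀ i, p.1 i = 0) ∧ p.2 = 0
    · have : W p = Set.univ := by
        apply Set.eq_univ_of_forall; intro x; exact Or.inr hc
      rw [this]; exact isOpen_univ
    · have : W p = (Z p)ᶜ := by
        ext x
        simp only [hW, Set.mem_union, Set.mem_setOf_eq, Set.mem_compl_iff, hZ,
          Set.mem_inter_iff, Set.mem_preimage, Set.mem_singleton_iff]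
        tauto
      rw [this]; exact (hZclosed p).isOpen_compl
  have hWdense : ∀ p, Dense (W p) := by
    intro p
    by_cases hc : (∀ i, p.1 i = 0) ∧ p.2 = 0
    · have : W p = Set.univ := by
        apply Set.eq_univ_of_forall; intro x; exact Or.inr hc
      rw [this]; exact dense_univ
    · -- show the complement of Z p is dense, i.e. Z p has empty interior
      have hZint : interior (Z p) = ∅ := by
        by_contra h
        obtain ⟨y, hy⟩ := Set.nonempty_iff_ne_empty.2 h
        have hyI : y ∈ I := (interior_subset hy).1
        have hev : f p =ᶠ[nhds y] 0 := by
          filter_upwards [isOpen_interior.mem_nhds hy] with x hx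
          exact (interior_subset hx).2
        have := (hfanal p).eqOn_zero_of_preconnected_of_eventuallyEq_zero
          isPreconnected_Icc hyI hev
        exact hc (hkey p this)
      intro x
      rw [mem_closure_iff]
      intro o ho hxo
      by_cases hx : x ∈ Z p
      · -- o is an open nbhd of x; it cannot be inside Z p since interior Z p = ∅
        have : ¬ o ⊆ Z p := by
          intro hsub
          have : x ∈ interior (Z p) := mem_interior.2 ⟨o, hsub, ho, hxo⟩
          simp [hZint] at this
        obtain ⟨z, hz1, hz2⟩ := Set.not_subset.1 this
        refine ⟨z, hz1, Or.inl ?_⟩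
        simpa [hZ] using hz2
      · refine ⟨x, hxo, Or.inl ?_⟩
        simpa [hZ] using hx
  -- Baire category: the intersection of all W p is dense
  have hG : Dense (⋂ p, W p) := dense_iInter_of_isOpen hWopen hWdense
  -- conclude
  intro x hx
  rw [mem_closure_iff]
  intro o ho hxo
  obtain ⟨δ, hδ, hball⟩ := Metric.isOpen_iff.1 ho x hxo
  -- the open interval inside o ∩ I
  set a : ℝ := max (x - δ) 0 with ha
  set b : ℝ := min (x + δ) ε₀ with hb
  have hab : a < b := by
    have h1 := hx.1
    have h2 := hx.2
    simp only [ha, hb, max_lt_iff, lt_min_iff]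
    refine ⟨⟨?_, ?_⟩, ⟨?_, ?_⟩⟩ <;> linarith
  have hIoo : Set.Ioo a b ⊆ o ∩ I := by
    intro z hz
    constructor
    · apply hball
      rw [Metric.mem_ball, Real.dist_eq, abs_lt]
      constructor
      · have := hz.1; simp only [ha, max_lt_iff] at this; linarith [this.1]
      · have := hz.2; simp only [hb, lt_min_iff] at this; linarith [this.1]
    · constructor
      · have := hz.1; simp only [ha, max_lt_iff] at this; linarith [this.2]
      · have := hz.2; simp only [hb, lt_min_iff] at this; linarith [this.2]
  obtain ⟨y, hy1, hy2⟩ := hG.exists_mem_open isOpen_Ioo (Set.nonempty_Ioo.2 hab)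
  have hyoI := hIoo hy2
  refine ⟨y, hyoI.1, hyoI.2, ?_⟩
  intro q q0 hq
  have hyW : y ∈ W (q, q0) := Set.mem_iInter.1 hy1 (q, q0)
  rcases hyW with h | h
  · exact absurd ⟨hyoI.2, hq⟩ h
  · exact h
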